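/- Let G be a graph. For every hypersphere representation of G with squared radius t < 1/2, every orthonormal representation p: V → ℝ^d of G, and every unit vector c ∈ ℝ^d with c not orthogonal to all vectors p(i), the inequality 2t + (∑_{i∈V} ⟨c,p(i)⟩²)^{−1} ≥ 1 holds. -/

import Mathlib

open scoped RealInnerProductSpace

def IsUnitDistRep {V : Type*} (G : SimpleGraph V) {d : ℕ}
    (u : V → EuclideanSpace ℝ (Fin d)) : Prop :=
  ∀ i j, G.Adj i j → ‖u i - u j‖ = 1

def IsHypersphereRep {V : Type*} (G : SimpleGraph V) {d : ℕ}
    (u : V → EuclideanSpace ℝ (Fin d)) (t : ℝ) : Prop :=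
  IsUnitDistRep G u ∧ ∀ i, ‖u i‖ ^ 2 = t

noncomputable def hypersphereNumber {V : Type*} (G : SimpleGraph V) : ℝ :=
  sInf {t | ∃ (d : ℕ) (u : V → EuclideanSpace ℝ (Fin d)), IsHypersphereRep G u t}

/-- An orthonormal representation of `G`: unit vectors, with vertices non-adjacent in `G`
mapped to orthogonal vectors. -/
def IsOrthonormalRep {V : Type*} (G : SimpleGraph V) {d : ℕ}
    (p : V → EuclideanSpace ℝ (Fin d)) : Prop :=
  (∀ i, ‖p i‖ = 1) ∧ ∀ i j, i ≠ j → ¬ G.Adj i j → ⟪p i, p j⟫ = 0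

/-- "Tensor product" of two Euclidean vectors. -/
def tens {d : ℕ} {ι : Type*} [Fintype ι] (f : EuclideanSpace ℝ (Fin d))
    (a : EuclideanSpace ℝ ι) : EuclideanSpace ℝ (Fin d × ι) :=
  WithLp.toLp 2 (fun kl => f kl.1 * a kl.2)

/-- Inner product of "tensor product" vectors factors. -/
lemma inner_tensor_factor {d : ℕ} {ι : Type*} [Fintype ι]
    (f g : EuclideanSpace ℝ (Fin d)) (a b : EuclideanSpace ℝ ι) :
    ⟪tens f a, tens g b⟫ = ⟪f, g⟫ * ⟪a, b⟫ := by
  unfold tens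
  simp only [PiLp.inner_apply, RCLike.inner_apply, starRingEnd_apply, star_trivial, PiLp.toLp_apply]
  rw [Fintype.sum_prod_type, Finset.sum_mul_sum]
  exact Finset.sum_congr rfl fun k _ => Finset.sum_congr rfl fun l _ => by ring

theorem hypersphere_orthonormal_minmax {V : Type*} [Fintype V] (G : SimpleGraph V)
    {m d : ℕ} {t : ℝ} (u : V → EuclideanSpace ℝ (Fin m))
    (hu : IsHypersphereRep G u t) (ht : t < 1 / 2)
    (p : V → EuclideanSpace ℝ (Fin d)) (hp : IsOrthonormalRep G p)
    (c : EuclideanSpace ℝ (Fin d)) (hc : ‖c‖ = 1) (hcp : ∃ i, ⟪c, p i⟫ ≠ 0) :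
    2 * t + (∑ i, ⟪c, p i⟫ ^ 2)⁻¹ ≥ 1 := by
  classical
  set s : ℝ := Real.sqrt (1 / 2 - t) with hs
  have hs2 : s ^ 2 = 1 / 2 - t := Real.sq_sqrt (by linarith)
  -- auxiliary vectors q i in EuclideanSpace ℝ (Fin m ⊕ Unit)
  set q : V → EuclideanSpace ℝ (Fin m ⊕ Unit) :=
    fun i => WithLp.toLp 2 (fun l => Real.sqrt 2 * Sum.elim (u i) (fun _ => s) l) with hq
  have h2 : (Real.sqrt 2) ^ 2 = 2 := Real.sq_sqrt (by norm_num)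
  have hqq : ∀ i j, ⟪q i, q j⟫ = 2 * (⟪u i, u j⟫ + s ^ 2) := by
    intro i j
    simp only [hq, PiLp.inner_apply, RCLike.inner_apply, starRingEnd_apply, star_trivial,
      Fintype.sum_sum_type, PiLp.toLp_apply]
    simp only [Sum.elim_inl, Sum.elim_inr, Finset.univ_unique, Finset.sum_singleton]
    have : ∀ a : Fin m, Real.sqrt 2 * u j a * (Real.sqrt 2 * u i a)
        = 2 * (u j a * u i a) := by
      intro a
      have : Real.sqrt 2 * u j a * (Real.sqrt 2 * u i a)
          = (Real.sqrt 2) ^ 2 * (u j a * u i a) := by ring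
      rw [this, h2]
    rw [Finset.sum_congr rfl fun a _ => this a, ← Finset.mul_sum]
    linear_combination s ^ 2 * h2
  have huii : ∀ i, ⟪u i, u i⟫ = t := by
    intro i
    rw [real_inner_self_eq_norm_sq, hu.2 i]
  have hqi : ∀ i, ⟪q i, q i⟫ = 1 := by
    intro i; rw [hqq, huii, hs2]; ring
  have hqadj : ∀ i j, G.Adj i j → ⟪q i, q j⟫ = 0 := by
    intro i j hij
    have h1 : ‖u i - u j‖ = 1 := hu.1 i j hij
    have h2' : ‖u i - u j‖ ^ 2 = ‖u i‖ ^ 2 - 2 * ⟪u i, u j⟫ + ‖u j‖ ^ 2 :=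
      norm_sub_sq_real _ _
    rw [h1, hu.2 i, hu.2 j] at h2'
    have : ⟪u i, u j⟫ = t - 1 / 2 := by linarith
    rw [hqq, this, hs2]; ring
  have hpi : ∀ i, ⟪p i, p i⟫ = 1 := by
    intro i
    rw [real_inner_self_eq_norm_sq, hp.1 i]; norm_num
  -- tensor vectors
  set x : V → EuclideanSpace ℝ (Fin d × (Fin m ⊕ Unit)) :=
    fun i => tens (p i) (q i) with hx
  have hxinner : ∀ i j, ⟪x i, x j⟫ = ⟪p i, p j⟫ * ⟪q i, q j⟫ := by
    intro i j
    exact inner_tensor_factor (p i) (p j) (q i) (q j)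
  have hxon : Orthonormal ℝ x := by
    rw [orthonormal_iff_ite]
    intro i j
    rw [hxinner]
    by_cases hij : i = j
    · subst hij; rw [hpi, hqi]; simp
    · simp only [hij, if_false]
      by_cases hadj : G.Adj i j
      · rw [hqadj i j hadj]; ring
      · rw [hp.2 i j hij hadj]; ring
  -- the vector y = c ⊗ e
  set e : EuclideanSpace ℝ (Fin m ⊕ Unit) := WithLp.toLp 2 (fun l => Sum.elim 0 (fun _ => 1) l) with he
  set y : EuclideanSpace ℝ (Fin d × (Fin m ⊕ Unit)) := tens c e with hy
  have hee : ⟪e, e⟫ = 1 := by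
    rw [he, PiLp.inner_apply]; simp [Fintype.sum_sum_type]
  have hyy : ‖y‖ ^ 2 = 1 := by
    rw [← real_inner_self_eq_norm_sq, hy]
    rw [inner_tensor_factor c c e e, hee, real_inner_self_eq_norm_sq, hc]
    norm_num
  have hqe : ∀ i, ⟪q i, e⟫ = Real.sqrt 2 * s := by
    intro i
    simp [hq, he, PiLp.inner_apply, Fintype.sum_sum_type]
  have hxy : ∀ i, ⟪x i, y⟫ = ⟪p i, c⟫ * (Real.sqrt 2 * s) := by
    intro i
    rw [hx, hy, inner_tensor_factor (p i) c (q i) e, hqe]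
  -- Bessel
  have hbessel := hxon.sum_inner_products_le y (s := Finset.univ)
  rw [hyy] at hbessel
  have hsum : ∀ i : V, ‖⟪x i, y⟫‖ ^ 2 = ⟪c, p i⟫ ^ 2 * (2 * s ^ 2) := by
    intro i
    have hcomm : ⟪p i, c⟫ = ⟪c, p i⟫ := real_inner_comm _ _
    rw [hxy i, Real.norm_eq_abs, sq_abs]
    linear_combination (⟪c, p i⟫ ^ 2 * s ^ 2) * h2
      + ((⟪p i, c⟫ + ⟪c, p i⟫) * (Real.sqrt 2 * s) ^ 2) * hcomm
  rw [Finset.sum_congr rfl fun i _ => hsum i, ← Finset.sum_mul] at hbessel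
  set S : ℝ := ∑ i, ⟪c, p i⟫ ^ 2 with hS
  have hSpos : 0 < S := by
    obtain ⟨i, hi⟩ := hcp
    have : 0 < ⟪c, p i⟫ ^ 2 := by positivity
    exact Finset.sum_pos' (fun j _ => by positivity) ⟨i, Finset.mem_univ i, this⟩
  have hkey : S * (1 - 2 * t) ≤ 1 := by
    have : 2 * s ^ 2 = 1 - 2 * t := by rw [hs2]; ring
    rw [this] at hbessel; linarith
  have : 1 - 2 * t ≤ S⁻¹ := by
    rw [← one_div, le_div_iff₀ hSpos]
    linarith
  linarith
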